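/- Let k be a field of characteristic different from 2, let n > 2, let α_1,…,α_n be nonzero elements of k, and let Q(T_1,…,T_n) = α_1T_1² + … + α_nT_n² with associated bilinear form B(u,v) = Σ_i α_i u_i v_i. Let v = (v_1,…,v_n) ∈ k^n be a vector such that v_i ≠ 0 for some index i < n. Then there exists a vector u = (u_1,…,u_n) ∈ k^n such that B(u,v) ≠ 0, Q(u) ≠ 0, and u_n ≠ 0. -/

import Mathlib

lemma sum_three_aux {M : Type*} [AddCommMonoid M] {n : ℕ} (a b c : Fin n)
    (hab : a ≠ b) (hac : a ≠ c) (hbc : b ≠ c) (f : Fin n → M)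
    (hf : ∀ m, m ≠ a → m ≠ b → m ≠ c → f m = 0) :
    ∑ m, f m = f a + f b + f c := by
  have h : ∑ m, f m = ∑ m ∈ ({a, b, c} : Finset (Fin n)), f m := by
    symm
    apply Finset.sum_subset (Finset.subset_univ _)
    intro m _ hm
    simp only [Finset.mem_insert, Finset.mem_singleton, not_or] at hm
    exact hf m hm.1 hm.2.1 hm.2.2
  rw [h, Finset.sum_insert (by simp [hab, hac]),
    Finset.sum_insert (by simp [hbc]), Finset.sum_singleton, add_assoc]

theorem exists_reflection_vector
    {k : Type*} [Field k] (hchar : ringChar k ≠ 2)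
    {n : ℕ} (hn : 2 < n) (α : Fin n → k) (hα : ∀ i, α i ≠ 0)
    (v : Fin n → k) (hv : ∃ i : Fin n, (i : ℕ) < n - 1 ∧ v i ≠ 0) :
    ∃ u : Fin n → k,
      (∑ i, α i * u i * v i) ≠ 0 ∧
      (∑ i, α i * u i ^ 2) ≠ 0 ∧
      u ⟨n - 1, by omega⟩ ≠ 0 := by
  obtain ⟨i, hi, hvi⟩ := hv
  have h2 : (2 : k) ≠ 0 := Ring.two_ne_zero hchar
  set last : Fin n := ⟨n - 1, by omega⟩ with hlast
  have hil : i ≠ last := by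
    intro h
    have : (i : ℕ) = n - 1 := by rw [h]
    omega
  -- choose a spare index j distinct from i and last
  obtain ⟨j, hji, hjl⟩ : ∃ j : Fin n, j ≠ i ∧ j ≠ last := by
    by_cases h0 : (i : ℕ) = 0
    · refine ⟨⟨1, by omega⟩, ?_, ?_⟩ <;>
        · intro h
          have := congrArg (Fin.val) h
          simp only [hlast, Fin.val_mk] at this
          omega
    · refine ⟨⟨0, by omega⟩, ?_, ?_⟩ <;>
        · intro h
          have := congrArg (Fin.val) h
          simp only [hlast, Fin.val_mk] at this
          omega
  set u : k → k → k → Fin n → k :=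
    fun s r t m => if m = i then s else if m = j then r else if m = last then t else 0
    with hu
  have huL : ∀ s r t, u s r t last = t := by
    intro s r t
    simp [hu, hil.symm, hjl.symm, Ne.symm hil]
  have hB : ∀ s r t, (∑ m, α m * u s r t m * v m)
      = α i * s * v i + α j * r * v j + α last * t * v last := by
    intro s r t
    rw [sum_three_aux i j last (Ne.symm hji) hil hjl]
    · simp [hu, Ne.symm hji, hji, hil.symm, hjl.symm]
    · intro m hmi hmj hml
      simp [hu, hmi, hmj, hml]
  have hQ : ∀ s r t, (∑ m, α m * u s r t m ^ 2)
      = α i * s ^ 2 + α j * r ^ 2 + α last * t ^ 2 := by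
    intro s r t
    rw [sum_three_aux i j last (Ne.symm hji) hil hjl]
    · simp [hu, Ne.symm hji, hji, hil.symm, hjl.symm]
    · intro m hmi hmj hml
      simp [hu, hmi, hmj, hml]
  by_cases hAC : α i + α last = 0
  · -- degenerate case: use three coordinates, Q = α j always
    by_cases hb : α i * v i + α j * v j + α last * v last = 0
    · refine ⟨u (-1) 1 1, ?_, ?_, by rw [huL]; exact one_ne_zero⟩
      · rw [hB]
        intro h
        have h2a : (2 : k) * (α i * v i) = 0 := by linear_combination hb - h
        exact (mul_ne_zero h2 (mul_ne_zero (hα i) hvi)) h2a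
      · rw [hQ]
        intro h
        apply hα j
        linear_combination h - hAC
    · refine ⟨u 1 1 1, ?_, ?_, by rw [huL]; exact one_ne_zero⟩
      · rw [hB]
        intro h
        exact hb (by linear_combination h)
      · rw [hQ]
        intro h
        apply hα j
        linear_combination h - hAC
  · -- main case: use two coordinates, Q = α i + α last ≠ 0
    by_cases hb : α i * v i + α last * v last = 0
    · refine ⟨u (-1) 0 1, ?_, ?_, by rw [huL]; exact one_ne_zero⟩
      · rw [hB]
        intro h
        have h2a : (2 : k) * (α i * v i) = 0 := by linear_combination hb - h
        exact (mul_ne_zero h2 (mul_ne_zero (hα i) hvi)) h2a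
      · rw [hQ]
        intro h
        exact hAC (by linear_combination h)
    · refine ⟨u 1 0 1, ?_, ?_, by rw [huL]; exact one_ne_zero⟩
      · rw [hB]
        intro h
        exact hb (by linear_combination h)
      · rw [hQ]
        intro h
        exact hAC (by linear_combination h)
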